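/- Let d ≥ 1 and n_1, …, n_d ≥ 1, and let T be a real tensor of size n_1 × ⋯ × n_d, i.e. a map assigning a real number T_{i_1…i_d} to each index tuple. Then T is orthogonally decomposable if and only if for every q ∈ {1,…,d} the contraction T•_q T satisfies all of the following symmetries: for every ℓ ∈ {1,…,d} with ℓ ≠ q and all index tuples (i_1,…,i_{q-1},i_{q+1},…,i_d) and (j_1,…,j_{q-1},j_{q+1},…,j_d), the entry (T•_q T)_{i_1…i_{q-1}i_{q+1}…i_d j_1…j_{q-1}j_{q+1}…j_d} is unchanged when i_ℓ and j_ℓ are exchanged. -/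

import Mathlib

open Finset Matrix

private lemma sum_sq_ne_zero {n : ℕ} {f : Fin n → ℝ} (hf : f ≠ 0) :
    (∑ k, f k * f k) ≠ 0 := by
  intro h
  apply hf
  funext k
  have h0 : ∀ k ∈ univ (α := Fin n), f k * f k = 0 := by
    intro k _
    have := (Finset.sum_eq_zero_iff_of_nonneg (fun i _ => mul_self_nonneg (f i))).mp h
    exact this k (mem_univ k)
  have := h0 k (mem_univ k)
  exact mul_self_eq_zero.mp this

private lemma pair_extract {r n : ℕ} (f : Fin r → Fin n → ℝ)
    (horth : ∀ s t, s ≠ t → (∑ k, f s k * f t k) = 0) (g : Fin r → ℝ) (t : Fin r) :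
    (∑ b, f t b * ∑ s, f s b * g s) = (∑ k, f t k * f t k) * g t := by
  have : (∑ b, f t b * ∑ s, f s b * g s) = ∑ s, (∑ b, f t b * f s b) * g s := by
    simp_rw [Finset.mul_sum, Finset.sum_mul]
    rw [Finset.sum_comm]
    exact Finset.sum_congr rfl fun s _ => Finset.sum_congr rfl fun b _ => by ring
  rw [this]
  rw [Finset.sum_eq_single t (fun s _ hs => by rw [horth t s (Ne.symm hs)]; ring)
    (fun h => absurd (mem_univ t) h)]

private lemma sum_mul_sum_contract {R M : Type*} [Fintype R] [Fintype M] (g h : R → ℝ)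
    (G H : R → M → ℝ) :
    (∑ mm, (∑ s, g s * G s mm) * (∑ t, h t * H t mm))
      = ∑ s, ∑ t, g s * h t * ∑ mm, G s mm * H t mm := by
  simp_rw [Finset.sum_mul, Finset.mul_sum]
  rw [Finset.sum_comm]
  refine Finset.sum_congr rfl fun s _ => ?_
  rw [Finset.sum_comm]
  refine Finset.sum_congr rfl fun t _ => ?_
  refine Finset.sum_congr rfl fun mm _ => by ring

private lemma contract_expand {r N : ℕ} (e : Fin r → Fin N → ℝ)
    (horth : ∀ s t, s ≠ t → (∑ k, e s k * e t k) = 0) (g h : Fin r → ℝ) :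
    (∑ m, (∑ s, e s m * g s) * (∑ t, e t m * h t))
      = ∑ s, (∑ k, e s k * e s k) * (g s * h s) := by
  have := sum_mul_sum_contract g h (fun s m => e s m) (fun t m => e t m)
  have h2 : (∑ m, (∑ s, e s m * g s) * (∑ t, e t m * h t))
      = ∑ mm, (∑ s, g s * e s mm) * (∑ t, h t * e t mm) := by
    refine Finset.sum_congr rfl fun mm _ => ?_
    congr 1 <;> exact Finset.sum_congr rfl fun s _ => by ring
  rw [h2, this]
  refine Finset.sum_congr rfl fun s _ => ?_
  rw [Finset.sum_eq_single s (fun t _ ht => by rw [horth s t (Ne.symm ht)]; ring)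
    (fun h => absurd (mem_univ s) h)]
  ring

private lemma cancel_orth {r n₂ : ℕ} (f : Fin r → Fin n₂ → ℝ)
    (horth : ∀ s t, s ≠ t → (∑ k, f s k * f t k) = 0) (X Y : Fin r → ℝ)
    (h : ∀ b b', (∑ s, f s b * f s b' * X s) = ∑ s, f s b * f s b' * Y s)
    (t : Fin r) (hft : f t ≠ 0) : X t = Y t := by
  have key : ∀ b, (∑ k, f t k * f t k) * (f t b * X t) = (∑ k, f t k * f t k) * (f t b * Y t) := by
    intro b
    have e1 := pair_extract f horth (fun s => f s b * X s) t
    have e2 := pair_extract f horth (fun s => f s b * Y s) t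
    rw [← e1, ← e2]
    refine Finset.sum_congr rfl fun b' _ => ?_
    congr 1
    calc (∑ s, f s b' * (f s b * X s)) = ∑ s, f s b * f s b' * X s :=
          Finset.sum_congr rfl fun s _ => by ring
      _ = ∑ s, f s b * f s b' * Y s := h b b'
      _ = ∑ s, f s b' * (f s b * Y s) := Finset.sum_congr rfl fun s _ => by ring
  obtain ⟨b0, hb0⟩ := Function.ne_iff.mp hft
  have h1 := mul_left_cancel₀ (sum_sq_ne_zero hft) (key b0)
  exact mul_left_cancel₀ hb0 h1

private lemma cancel_orth2 {r n₁ n₂ : ℕ} (e : Fin r → Fin n₁ → ℝ) (f : Fin r → Fin n₂ → ℝ)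
    (he : ∀ s t, (∑ k, e s k * e t k) = if s = t then 1 else 0)
    (hf : ∀ s t, s ≠ t → (∑ k, f s k * f t k) = 0) (Z : Fin r → Fin r → ℝ)
    (h : ∀ a a' b b', (∑ s, ∑ t, e s a * f s b * (e t a' * f t b') * Z s t)
        = ∑ s, ∑ t, e s a * f s b' * (e t a' * f t b) * Z s t)
    (σ τ : Fin r) (hστ : σ ≠ τ) (hfσ : f σ ≠ 0) (hfτ : f τ ≠ 0) : Z σ τ = 0 := by
  have horth_e : ∀ s t, s ≠ t → (∑ k, e s k * e t k) = 0 := fun s t hst => by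
    rw [he s t, if_neg hst]
  have heσ : (∑ k, e σ k * e σ k) = 1 := by rw [he σ σ, if_pos rfl]
  have heτ : (∑ k, e τ k * e τ k) = 1 := by rw [he τ τ, if_pos rfl]
  have hL : ∀ a' b b', (∑ a, e σ a * ∑ s, ∑ t, e s a * f s b * (e t a' * f t b') * Z s t)
      = ∑ t, f σ b * (e t a' * f t b') * Z σ t := by
    intro a' b b'
    have h0 : (∑ a, e σ a * ∑ s, ∑ t, e s a * f s b * (e t a' * f t b') * Z s t)
        = ∑ a, e σ a * ∑ s, e s a * (∑ t, f s b * (e t a' * f t b') * Z s t) := by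
      refine Finset.sum_congr rfl fun a _ => ?_
      congr 1
      refine Finset.sum_congr rfl fun s _ => ?_
      rw [Finset.mul_sum]
      exact Finset.sum_congr rfl fun t _ => by ring
    rw [h0, pair_extract e horth_e _ σ, heσ, one_mul]
  have hL2 : ∀ b b', (∑ a', e τ a' * ∑ t, f σ b * (e t a' * f t b') * Z σ t)
      = f σ b * f τ b' * Z σ τ := by
    intro b b'
    have h0 : (∑ a', e τ a' * ∑ t, f σ b * (e t a' * f t b') * Z σ t)
        = ∑ a', e τ a' * ∑ t, e t a' * (f σ b * f t b' * Z σ t) := by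
      refine Finset.sum_congr rfl fun a' _ => ?_
      congr 1
      exact Finset.sum_congr rfl fun t _ => by ring
    rw [h0, pair_extract e horth_e _ τ, heτ, one_mul]
  have hL3 : ∀ b', (∑ b, f σ b * (f σ b * f τ b' * Z σ τ))
      = (∑ k, f σ k * f σ k) * (f τ b' * Z σ τ) := by
    intro b'
    calc (∑ b, f σ b * (f σ b * f τ b' * Z σ τ))
        = ∑ b, (f σ b * f σ b) * (f τ b' * Z σ τ) := Finset.sum_congr rfl fun b _ => by ring
      _ = (∑ k, f σ k * f σ k) * (f τ b' * Z σ τ) := by rw [← Finset.sum_mul]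
  have hR : ∀ a' b b', (∑ a, e σ a * ∑ s, ∑ t, e s a * f s b' * (e t a' * f t b) * Z s t)
      = ∑ t, f σ b' * (e t a' * f t b) * Z σ t := by
    intro a' b b'
    have h0 : (∑ a, e σ a * ∑ s, ∑ t, e s a * f s b' * (e t a' * f t b) * Z s t)
        = ∑ a, e σ a * ∑ s, e s a * (∑ t, f s b' * (e t a' * f t b) * Z s t) := by
      refine Finset.sum_congr rfl fun a _ => ?_
      congr 1
      refine Finset.sum_congr rfl fun s _ => ?_
      rw [Finset.mul_sum]
      exact Finset.sum_congr rfl fun t _ => by ring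
    rw [h0, pair_extract e horth_e _ σ, heσ, one_mul]
  have hR2 : ∀ b b', (∑ a', e τ a' * ∑ t, f σ b' * (e t a' * f t b) * Z σ t)
      = f σ b' * f τ b * Z σ τ := by
    intro b b'
    have h0 : (∑ a', e τ a' * ∑ t, f σ b' * (e t a' * f t b) * Z σ t)
        = ∑ a', e τ a' * ∑ t, e t a' * (f σ b' * f t b * Z σ t) := by
      refine Finset.sum_congr rfl fun a' _ => ?_
      congr 1
      exact Finset.sum_congr rfl fun t _ => by ring
    rw [h0, pair_extract e horth_e _ τ, heτ, one_mul]
  have hR3 : ∀ b', (∑ b, f σ b * (f σ b' * f τ b * Z σ τ)) = 0 := by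
    intro b'
    have : (∑ b, f σ b * (f σ b' * f τ b * Z σ τ))
        = (∑ b, f σ b * f τ b) * (f σ b' * Z σ τ) := by
      rw [Finset.sum_mul]
      exact Finset.sum_congr rfl fun b _ => by ring
    rw [this, hf σ τ hστ, zero_mul]
  have lhs_eq : (∑ b', f τ b' * ∑ b, f σ b * ∑ a', e τ a' *
        ∑ a, e σ a * ∑ s, ∑ t, e s a * f s b * (e t a' * f t b') * Z s t)
      = (∑ k, f σ k * f σ k) * (∑ k, f τ k * f τ k) * Z σ τ := by
    have step : (∑ b', f τ b' * ∑ b, f σ b * ∑ a', e τ a' *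
          ∑ a, e σ a * ∑ s, ∑ t, e s a * f s b * (e t a' * f t b') * Z s t)
        = ∑ b', f τ b' * ((∑ k, f σ k * f σ k) * (f τ b' * Z σ τ)) := by
      refine Finset.sum_congr rfl fun b' _ => ?_
      congr 1
      rw [← hL3 b']
      refine Finset.sum_congr rfl fun b _ => ?_
      congr 1
      rw [← hL2 b b']
      refine Finset.sum_congr rfl fun a' _ => ?_
      congr 1
      exact hL a' b b'
    rw [step]
    have : (∑ b', f τ b' * ((∑ k, f σ k * f σ k) * (f τ b' * Z σ τ)))
        = (∑ b', f τ b' * f τ b') * ((∑ k, f σ k * f σ k) * Z σ τ) := by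
      rw [Finset.sum_mul]
      exact Finset.sum_congr rfl fun b' _ => by ring
    rw [this]; ring
  have rhs_eq : (∑ b', f τ b' * ∑ b, f σ b * ∑ a', e τ a' *
        ∑ a, e σ a * ∑ s, ∑ t, e s a * f s b' * (e t a' * f t b) * Z s t) = 0 := by
    have step : (∑ b', f τ b' * ∑ b, f σ b * ∑ a', e τ a' *
          ∑ a, e σ a * ∑ s, ∑ t, e s a * f s b' * (e t a' * f t b) * Z s t)
        = ∑ b', f τ b' * (0:ℝ) := by
      refine Finset.sum_congr rfl fun b' _ => ?_
      congr 1
      rw [← hR3 b']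
      refine Finset.sum_congr rfl fun b _ => ?_
      congr 1
      rw [← hR2 b b']
      refine Finset.sum_congr rfl fun a' _ => ?_
      congr 1
      exact hR a' b b'
    rw [step]
    simp
  have quad_eq : (∑ b', f τ b' * ∑ b, f σ b * ∑ a', e τ a' *
        ∑ a, e σ a * ∑ s, ∑ t, e s a * f s b * (e t a' * f t b') * Z s t)
      = ∑ b', f τ b' * ∑ b, f σ b * ∑ a', e τ a' *
        ∑ a, e σ a * ∑ s, ∑ t, e s a * f s b' * (e t a' * f t b) * Z s t := by
    refine Finset.sum_congr rfl fun b' _ => ?_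
    congr 1
    refine Finset.sum_congr rfl fun b _ => ?_
    congr 1
    refine Finset.sum_congr rfl fun a' _ => ?_
    congr 1
    refine Finset.sum_congr rfl fun a _ => ?_
    congr 1
    exact h a a' b b'
  have main : (∑ k, f σ k * f σ k) * (∑ k, f τ k * f τ k) * Z σ τ = 0 := by
    rw [← lhs_eq, quad_eq, rhs_eq]
  exact (mul_eq_zero.mp main).resolve_left
    (mul_ne_zero (sum_sq_ne_zero hfσ) (sum_sq_ne_zero hfτ))

private lemma exists_joint_eigenbasis {N : ℕ} {ι : Type} [Fintype ι]
    (G : ι → Matrix (Fin N) (Fin N) ℝ)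
    (hsymm : ∀ i, (G i).IsHermitian)
    (hcomm : ∀ i j, G i * G j = G j * G i) :
    ∃ (e : Fin N → Fin N → ℝ) (μ : ι → Fin N → ℝ),
      (∀ s t, (∑ k, e s k * e t k) = if s = t then 1 else 0) ∧
      (∀ i s, (G i).mulVec (e s) = μ i s • e s) := by
  classical
  set T : ι → (EuclideanSpace ℝ (Fin N)) →ₗ[ℝ] (EuclideanSpace ℝ (Fin N)) :=
    fun i => Matrix.toEuclideanLin (G i) with hT
  have hTsymm : ∀ i, (T i).IsSymmetric := fun i =>
    Matrix.isHermitian_iff_isSymmetric.mp (hsymm i)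
  have hTapp : ∀ i (x : EuclideanSpace ℝ (Fin N)), T i x = (G i).mulVec x := fun i x => rfl
  have hTcomm : Pairwise (Function.onFun Commute T) := by
    intro i j _
    show T i * T j = T j * T i
    refine LinearMap.ext fun x => ?_
    apply WithLp.ofLp_injective
    rw [Module.End.mul_apply, Module.End.mul_apply, hTapp, hTapp, hTapp, hTapp,
      Matrix.mulVec_mulVec, Matrix.mulVec_mulVec, hcomm]
  have hV :=
    LinearMap.IsSymmetric.LinearMap.IsSymmetric.directSum_isInternal_of_pairwise_commute
      hTsymm hTcomm
  set V : (ι → ℝ) → Submodule ℝ (EuclideanSpace ℝ (Fin N)) :=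
    fun χ => ⨅ i, Module.End.eigenspace (T i) (χ i) with hVdef
  have hind := hV.submodule_iSupIndep
  haveI : Fintype {χ : ι → ℝ // V χ ≠ ⊥} := hind.fintypeNeBotOfFiniteDimensional
  have hV2 : DirectSum.IsInternal (fun χ : {χ : ι → ℝ // V χ ≠ ⊥} => V χ.1) :=
    DirectSum.isInternal_ne_bot_iff.mpr hV
  have hVorth := LinearMap.IsSymmetric.orthogonalFamily_iInf_eigenspaces hTsymm
  have hV2orth : OrthogonalFamily ℝ (fun χ : {χ : ι → ℝ // V χ ≠ ⊥} => V χ.1)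
      (fun χ => (V χ.1).subtypeₗᵢ) := by
    intro χ χ' hne x y
    exact hVorth (fun h => hne (Subtype.ext h)) x y
  have hrank : Module.finrank ℝ (EuclideanSpace ℝ (Fin N)) = N := finrank_euclideanSpace_fin
  let b := hV2.subordinateOrthonormalBasis hrank hV2orth
  let χof : Fin N → {χ : ι → ℝ // V χ ≠ ⊥} := fun s =>
    hV2.subordinateOrthonormalBasisIndex hrank s hV2orth
  refine ⟨fun s => b s, fun i s => (χof s).1 i, ?_, ?_⟩
  · intro s t
    have := orthonormal_iff_ite.mp b.orthonormal s t
    rw [← this]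
    simp [PiLp.inner_apply, RCLike.inner_apply, conj_trivial]
    exact Finset.sum_congr rfl fun x _ => mul_comm _ _
  · intro i s
    have hmem := hV2.subordinateOrthonormalBasis_subordinate hrank s hV2orth
    have hmem2 := (Submodule.mem_iInf _).mp hmem i
    have h3 := Module.End.mem_eigenspace_iff.mp hmem2
    replace h3 := congrArg WithLp.ofLp h3
    rw [hTapp] at h3
    exact h3

private lemma orthonormal_complete {N : ℕ} (e : Fin N → Fin N → ℝ)
    (he : ∀ s t, (∑ k, e s k * e t k) = if s = t then 1 else 0) (x : Fin N → ℝ) (j : Fin N) :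
    x j = ∑ s, (∑ k, e s k * x k) * e s j := by
  classical
  set E : Matrix (Fin N) (Fin N) ℝ := Matrix.of e with hE
  have h1 : E * Eᵀ = 1 := by
    ext s t
    simp only [Matrix.mul_apply, Matrix.transpose_apply, Matrix.one_apply, hE, Matrix.of_apply]
    rw [he s t]
  have h2 : Eᵀ * E = 1 := mul_eq_one_comm.mp h1
  have h3 : ∀ j k, (∑ s, e s j * e s k) = if j = k then 1 else 0 := by
    intro j k
    have := congrFun (congrFun h2 j) k
    simpa [Matrix.mul_apply, Matrix.transpose_apply, Matrix.one_apply, hE] using this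
  calc x j = ∑ k, (if j = k then (1:ℝ) else 0) * x k := by
        simp [ite_mul]
    _ = ∑ k, (∑ s, e s j * e s k) * x k := by
        refine Finset.sum_congr rfl fun k _ => ?_
        rw [h3]
    _ = ∑ k, ∑ s, e s j * e s k * x k := by
        refine Finset.sum_congr rfl fun k _ => ?_
        rw [Finset.sum_mul]
    _ = ∑ s, ∑ k, e s j * e s k * x k := Finset.sum_comm
    _ = ∑ s, (∑ k, e s k * x k) * e s j := by
        refine Finset.sum_congr rfl fun s _ => ?_
        rw [Finset.sum_mul]
        exact Finset.sum_congr rfl fun k _ => by ring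

private lemma simultaneous_svd {n₁ n₂ : ℕ} {W : Type} [Fintype W]
    (A : W → Fin n₁ → Fin n₂ → ℝ)
    (h1 : ∀ a b i j, (∑ k, A a i k * A b j k) = ∑ k, A a j k * A b i k)
    (h2 : ∀ a b i j, (∑ k, A a k i * A b k j) = ∑ k, A a k j * A b k i) :
    ∃ (e : Fin n₁ → Fin n₁ → ℝ) (f : Fin n₁ → Fin n₂ → ℝ) (u : Fin n₁ → W → ℝ),
      (∀ s t, (∑ k, e s k * e t k) = if s = t then 1 else 0) ∧
      (∀ s t, s ≠ t → (∑ k, f s k * f t k) = 0) ∧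
      (∀ w i j, A w i j = ∑ s, e s i * f s j * u s w) := by
  classical
  set G : W × W → Matrix (Fin n₁) (Fin n₁) ℝ :=
    fun p => Matrix.of (fun i j => ∑ k, A p.1 i k * A p.2 j k) with hG
  have hGapp : ∀ a b i j, G (a, b) i j = ∑ k, A a i k * A b j k := fun a b i j => rfl
  have hGsymm : ∀ p, (G p).IsHermitian := by
    rintro ⟨a, b⟩
    rw [Matrix.IsHermitian]
    ext i j
    rw [Matrix.conjTranspose_apply, hGapp, hGapp, star_trivial]
    exact h1 a b j i
  -- expansion of entries of a product of two G's
  have hLexp : ∀ a b c d (i j : Fin n₁),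
      (G (a, b) * G (c, d)) i j
        = ∑ k, ∑ l, A a i k * A d j l * ∑ p, A b p k * A c p l := by
    intro a b c d i j
    rw [Matrix.mul_apply]
    have : ∀ p, G (a, b) i p * G (c, d) p j
        = (∑ k, A a i k * A b p k) * (∑ l, A d j l * A c p l) := by
      intro p
      rw [hGapp, hGapp]
      congr 1
      exact Finset.sum_congr rfl fun l _ => by ring
    rw [Finset.sum_congr rfl fun p _ => this p]
    exact sum_mul_sum_contract (fun k => A a i k) (fun l => A d j l)
      (fun k p => A b p k) (fun l p => A c p l)
  have hGmul : ∀ a b c d, G (a, b) * G (c, d) = G (a, c) * G (b, d) := by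
    intro a b c d
    ext i j
    rw [hLexp, hLexp]
    refine Finset.sum_congr rfl fun k _ => Finset.sum_congr rfl fun l _ => ?_
    congr 1
    rw [h2 b c k l]
    exact Finset.sum_congr rfl fun p _ => by ring
  have hGswap : ∀ a b, G (a, b) = G (b, a) := by
    intro a b
    ext i j
    rw [hGapp, hGapp]
    rw [← h1 a b j i]
    exact Finset.sum_congr rfl fun k _ => by ring
  have hGcomm : ∀ p q, G p * G q = G q * G p := by
    rintro ⟨a, b⟩ ⟨c, d⟩
    rw [hGmul a b c d, hGmul c d a b, hGswap c a, hGswap d b]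
  obtain ⟨e, μ, he, heig⟩ := exists_joint_eigenbasis G hGsymm hGcomm
  set φ : W → Fin n₁ → Fin n₂ → ℝ := fun w s j => ∑ i, A w i j * e s i with hφ
  have hphi : ∀ a b s t, (∑ j, φ a s j * φ b t j) = if s = t then μ (a, b) t else 0 := by
    intro a b s t
    have step : (∑ j, φ a s j * φ b t j)
        = ∑ i, ∑ i', e s i * e t i' * ∑ j, A a i j * A b i' j := by
      have : ∀ j, φ a s j * φ b t j
          = (∑ i, e s i * A a i j) * (∑ i', e t i' * A b i' j) := by
        intro j
        rw [hφ]
        congr 1 <;> exact Finset.sum_congr rfl fun i _ => by ring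
      rw [Finset.sum_congr rfl fun j _ => this j]
      exact sum_mul_sum_contract (fun i => e s i) (fun i' => e t i')
        (fun i j => A a i j) (fun i' j => A b i' j)
    rw [step]
    have hmv : ∀ i, (∑ i', e s i * e t i' * ∑ j, A a i j * A b i' j)
        = e s i * (μ (a, b) t * e t i) := by
      intro i
      have hrow : (∑ i', G (a, b) i i' * e t i') = μ (a, b) t * e t i := by
        have := congrFun (heig (a, b) t) i
        rw [Matrix.mulVec, dotProduct] at this
        simpa [Pi.smul_apply, smul_eq_mul] using this
      calc (∑ i', e s i * e t i' * ∑ j, A a i j * A b i' j)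
          = e s i * ∑ i', G (a, b) i i' * e t i' := by
            rw [Finset.mul_sum]
            exact Finset.sum_congr rfl fun i' _ => by rw [hGapp]; ring
        _ = e s i * (μ (a, b) t * e t i) := by rw [hrow]
    rw [Finset.sum_congr rfl fun i _ => hmv i]
    have : (∑ i, e s i * (μ (a, b) t * e t i)) = μ (a, b) t * ∑ i, e s i * e t i := by
      rw [Finset.mul_sum]
      exact Finset.sum_congr rfl fun i _ => by ring
    rw [this, he s t]
    by_cases hst : s = t
    · rw [if_pos hst, if_pos hst, mul_one]
    · rw [if_neg hst, if_neg hst, mul_zero]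
  have he_ne : ∀ s, e s ≠ 0 := by
    intro s hs
    have := he s s
    rw [if_pos rfl] at this
    rw [hs] at this
    simp at this
  have hmu_eq : ∀ a b s, μ (a, b) s * μ (a, b) s = μ (a, a) s * μ (b, b) s := by
    intro a b s
    have h0 : G (a, b) * G (a, b) = G (a, a) * G (b, b) := hGmul a b a b
    have hap : ∀ (M1 M2 : Matrix (Fin n₁) (Fin n₁) ℝ) (c1 c2 : ℝ),
        M1.mulVec (e s) = c1 • e s → M2.mulVec (e s) = c2 • e s →
        (M1 * M2).mulVec (e s) = (c1 * c2) • e s := by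
      intro M1 M2 c1 c2 hm1 hm2
      rw [← Matrix.mulVec_mulVec, hm2, Matrix.mulVec_smul, hm1, smul_smul, mul_comm]
    have e1 := hap _ _ _ _ (heig (a, b) s) (heig (a, b) s)
    have e2 := hap _ _ _ _ (heig (a, a) s) (heig (b, b) s)
    rw [h0, e2] at e1
    obtain ⟨k0, hk0⟩ := Function.ne_iff.mp (he_ne s)
    have := congrFun e1 k0
    simp only [Pi.smul_apply, smul_eq_mul] at this
    have h5 : μ (a, b) s * μ (a, b) s * e s k0 = μ (a, a) s * μ (b, b) s * e s k0 := by
      linarith [this]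
    exact mul_right_cancel₀ hk0 h5
  -- construct f and u
  set F : Fin n₁ → Fin n₂ → ℝ :=
    fun s => if h : ∃ w, φ w s ≠ 0 then φ (Classical.choose h) s else 0 with hF
  set U : Fin n₁ → W → ℝ :=
    fun s w => (∑ j, φ w s j * F s j) / (∑ j, F s j * F s j) with hU
  have hrep : ∀ w s j, φ w s j = U s w * F s j := by
    intro w s j
    by_cases h : ∃ w', φ w' s ≠ 0
    · have hFs : F s = φ (Classical.choose h) s := by rw [hF]; exact dif_pos h
      set g := φ (Classical.choose h) s with hg
      have hgne : g ≠ 0 := Classical.choose_spec h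
      set K : ℝ := ∑ j', g j' * g j' with hK
      have hKne : K ≠ 0 := sum_sq_ne_zero hgne
      set x := φ w s with hx
      set P : ℝ := ∑ j', x j' * g j' with hP
      -- Cauchy-Schwarz equality
      have hxx : (∑ j', x j' * x j') = μ (w, w) s := by
        have := hphi w w s s; rw [if_pos rfl] at this; exact this
      have hxg : P = μ (w, Classical.choose h) s := by
        have := hphi w (Classical.choose h) s s; rw [if_pos rfl] at this; exact this
      have hgg : K = μ (Classical.choose h, Classical.choose h) s := by
        have := hphi (Classical.choose h) (Classical.choose h) s s
        rw [if_pos rfl] at this; exact this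
      have hcs : K * (∑ j', x j' * x j') - P * P = 0 := by
        rw [hxx, hxg, hgg]
        have := hmu_eq w (Classical.choose h) s
        linarith [this]
      have hDzero : ∀ j', K * x j' - P * g j' = 0 := by
        intro j'
        have hsum : (∑ j'', (K * x j'' - P * g j'') * (K * x j'' - P * g j'')) = 0 := by
          have expand : (∑ j'', (K * x j'' - P * g j'') * (K * x j'' - P * g j''))
              = K * K * (∑ j'', x j'' * x j'') - 2 * K * P * (∑ j'', x j'' * g j'')
                + P * P * (∑ j'', g j'' * g j'') := by
            calc (∑ j'', (K * x j'' - P * g j'') * (K * x j'' - P * g j''))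
                = ∑ j'', ((K * K) * (x j'' * x j'') - (2 * K * P) * (x j'' * g j'')
                    + (P * P) * (g j'' * g j'')) :=
                  Finset.sum_congr rfl fun j'' _ => by ring
              _ = (∑ j'', (K * K) * (x j'' * x j''))
                    - (∑ j'', (2 * K * P) * (x j'' * g j''))
                    + ∑ j'', (P * P) * (g j'' * g j'') := by
                  rw [Finset.sum_add_distrib, Finset.sum_sub_distrib]
              _ = K * K * (∑ j'', x j'' * x j'') - 2 * K * P * (∑ j'', x j'' * g j'')
                    + P * P * (∑ j'', g j'' * g j'') := by
                  rw [← Finset.mul_sum, ← Finset.mul_sum, ← Finset.mul_sum]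
          rw [expand, ← hP, ← hK]
          have : K * K * (∑ j'', x j'' * x j'') = K * (P * P) := by
            have h6 : K * ((K * (∑ j'', x j'' * x j'')) - P * P) = 0 := by
              rw [hcs]; ring
            have h7 := mul_eq_zero.mp h6
            rcases h7 with h7 | h7
            · exact absurd h7 hKne
            · nlinarith [h7]
          nlinarith [this]
        have hterm := (Finset.sum_eq_zero_iff_of_nonneg
          (fun j'' _ => mul_self_nonneg (K * x j'' - P * g j''))).mp hsum j' (mem_univ j')
        exact mul_self_eq_zero.mp hterm
      have hKx : K * x j = P * g j := by
        have := hDzero j; linarith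
      have hUval : U s w = P / K := by
        show (∑ j', φ w s j' * F s j') / (∑ j', F s j' * F s j') = P / K
        rw [hFs, ← hx, ← hP, ← hK]
      rw [hUval, hFs, div_mul_eq_mul_div, eq_div_iff hKne]
      linear_combination hKx
    · have hphiz : ∀ w', φ w' s = 0 := by
        intro w'
        by_contra hne
        exact h ⟨w', hne⟩
      have : φ w s j = 0 := by rw [hphiz w]; rfl
      rw [this]
      have hFz : F s = 0 := by rw [hF]; exact dif_neg h
      rw [hFz]
      simp
  refine ⟨e, F, U, he, ?_, ?_⟩
  · intro s t hst
    by_cases hs : ∃ w, φ w s ≠ 0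
    · by_cases ht : ∃ w, φ w t ≠ 0
      · have hFs : F s = φ (Classical.choose hs) s := by rw [hF]; exact dif_pos hs
        have hFt : F t = φ (Classical.choose ht) t := by rw [hF]; exact dif_pos ht
        rw [hFs, hFt]
        have := hphi (Classical.choose hs) (Classical.choose ht) s t
        rw [if_neg hst] at this
        exact this
      · have hFt : F t = 0 := by rw [hF]; exact dif_neg ht
        rw [hFt]
        simp
    · have hFs : F s = 0 := by rw [hF]; exact dif_neg hs
      rw [hFs]
      simp
  · intro w i j
    have hoc := orthonormal_complete e he (fun i' => A w i' j) i
    rw [hoc]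
    refine Finset.sum_congr rfl fun s _ => ?_
    have : (∑ k, e s k * A w k j) = φ w s j := by
      rw [hφ]
      exact Finset.sum_congr rfl fun k _ => by ring
    rw [this, hrep w s j]
    ring

private lemma pure_of_exchange {m : ℕ} {k : Fin m → ℕ} (u : (∀ j, Fin (k j)) → ℝ)
    (h : ∀ (ℓ : Fin m) (w w' : ∀ j, Fin (k j)),
      u w * u w' = u (Function.update w ℓ (w' ℓ)) * u (Function.update w' ℓ (w ℓ))) :
    ∃ (c : ℝ) (v : ∀ j, Fin (k j) → ℝ),
      (∀ w, u w = c * ∏ j, v j (w j)) ∧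
      ((∀ j x, v j x = 0) ∨ (c ≠ 0 ∧ ∃ wst : ∀ j, Fin (k j), ∀ j, v j (wst j) ≠ 0)) := by
  classical
  by_cases hu : ∀ w, u w = 0
  · exact ⟨0, fun j _ => 0, fun w => by rw [hu w, zero_mul], Or.inl fun j x => rfl⟩
  · push_neg at hu
    obtain ⟨ws, hws⟩ := hu
    set v : ∀ j, Fin (k j) → ℝ := fun j x => u (Function.update ws j x) with hv
    set c : ℝ := u ws * ((u ws)⁻¹) ^ m with hc
    have key : ∀ (S : Finset (Fin m)) (w : ∀ j, Fin (k j)),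
        u (fun j => if j ∈ S then w j else ws j) * (u ws) ^ S.card
          = u ws * ∏ j ∈ S, v j (w j) := by
      intro S
      induction S using Finset.induction_on with
      | empty =>
        intro w
        simp only [Finset.notMem_empty, if_false, Finset.card_empty, pow_zero,
          Finset.prod_empty, mul_one]
      | @insert a S ha ih =>
        intro w
        set wS : ∀ j, Fin (k j) := fun j => if j ∈ S then w j else ws j with hwS
        have hins : (fun j => if j ∈ insert a S then w j else ws j)
            = Function.update wS a (w a) := by
          funext j
          by_cases hj : j = a
          · subst hj
            simp [Function.update_self, Finset.mem_insert]
          · simp [Function.update_of_ne hj, hwS, Finset.mem_insert, hj]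
        have hwSa : wS a = ws a := by simp [hwS, ha]
        have hex := h a (Function.update wS a (w a)) ws
        rw [Function.update_idem, Function.update_self] at hex
        have h1 : Function.update wS a (ws a) = wS := by
          rw [← hwSa, Function.update_eq_self]
        rw [h1] at hex
        -- hex : u (update wS a (w a)) * u ws = u wS * u (update ws a (w a))
        rw [hins, Finset.card_insert_of_notMem ha, Finset.prod_insert ha, pow_succ]
        calc u (Function.update wS a (w a)) * ((u ws) ^ S.card * u ws)
            = (u (Function.update wS a (w a)) * u ws) * (u ws) ^ S.card := by ring
          _ = (u wS * u (Function.update ws a (w a))) * (u ws) ^ S.card := by rw [hex]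
          _ = (u wS * (u ws) ^ S.card) * u (Function.update ws a (w a)) := by ring
          _ = (u ws * ∏ j ∈ S, v j (w j)) * u (Function.update ws a (w a)) := by rw [ih w]
          _ = u ws * (v a (w a) * ∏ j ∈ S, v j (w j)) := by rw [hv]; ring
    refine ⟨c, v, ?_, Or.inr ⟨?_, ws, ?_⟩⟩
    · intro w
      have h0 := key univ w
      have h1 : (fun j => if j ∈ (univ : Finset (Fin m)) then w j else ws j) = w := by
        funext j; simp
      rw [h1, Finset.card_univ, Fintype.card_fin] at h0
      -- h0 : u w * (u ws) ^ m = u ws * ∏ j, v j (w j)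
      have hpow : ((u ws)⁻¹) ^ m * (u ws) ^ m = 1 := by
        rw [← mul_pow, inv_mul_cancel₀ hws, one_pow]
      calc u w = u w * (((u ws)⁻¹) ^ m * (u ws) ^ m) := by rw [hpow, mul_one]
        _ = ((u ws)⁻¹) ^ m * (u w * (u ws) ^ m) := by ring
        _ = ((u ws)⁻¹) ^ m * (u ws * ∏ j, v j (w j)) := by rw [h0]
        _ = c * ∏ j, v j (w j) := by rw [hc]; ring
    · rw [hc]
      exact mul_ne_zero hws (pow_ne_zero m (inv_ne_zero hws))
    · intro j
      rw [hv]
      simp only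
      rw [Function.update_eq_self]
      exact hws

private lemma prod_update_eq {d : ℕ} {n : Fin d → ℕ} (v : ∀ j, Fin (n j) → ℝ)
    (idx : ∀ j, Fin (n j)) (q : Fin d) (m : Fin (n q)) :
    (∏ j, v j (Function.update idx q m j)) = v q m * ∏ j ∈ univ.erase q, v j (idx j) := by
  classical
  rw [← Finset.mul_prod_erase univ _ (mem_univ q), Function.update_self]
  congr 1
  refine Finset.prod_congr rfl fun j hj => ?_
  rw [Function.update_of_ne (Finset.ne_of_mem_erase hj)]

/-- A real tensor `T` of size `n 0 × ⋯ × n (d-1)` is orthogonally decomposable (odeco) if it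
can be written as a sum of `r` rank-one terms `v i 0 ⊗ ⋯ ⊗ v i (d-1)` in which, for every mode
`j`, the vectors `v 0 j, …, v (r-1) j` are pairwise orthogonal in `ℝ^(n j)` with the standard
inner product. -/
def IsOdeco {d : ℕ} {n : Fin d → ℕ} (T : (∀ j : Fin d, Fin (n j)) → ℝ) : Prop :=
  ∃ (r : ℕ) (v : Fin r → ∀ j : Fin d, Fin (n j) → ℝ),
    (∀ (j : Fin d) (i i' : Fin r), i ≠ i' → (∑ a, v i j a * v i' j a) = 0) ∧
    ∀ idx : ∀ j : Fin d, Fin (n j), T idx = ∑ i, ∏ j, v i j (idx j)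

private lemma odeco_forward {d : ℕ} {n : Fin d → ℕ} {T : (∀ j : Fin d, Fin (n j)) → ℝ}
    (hT : IsOdeco T) :
    ∀ (q ℓ : Fin d), ℓ ≠ q →
        ∀ i j : ∀ j' : Fin d, Fin (n j'),
          (∑ m : Fin (n q), T (Function.update i q m) * T (Function.update j q m)) =
          ∑ m : Fin (n q),
            T (Function.update (Function.update i ℓ (j ℓ)) q m) *
              T (Function.update (Function.update j ℓ (i ℓ)) q m) := by
  classical
  obtain ⟨r, v, horth, hrep⟩ := hT
  intro q ℓ hlq i j
  set P : Fin r → (∀ j' : Fin d, Fin (n j')) → ℝ :=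
    fun a idx => ∏ j' ∈ univ.erase q, v a j' (idx j') with hP
  have hTu : ∀ (idx : ∀ j' : Fin d, Fin (n j')) (m : Fin (n q)),
      T (Function.update idx q m) = ∑ a, v a q m * P a idx := by
    intro idx m
    rw [hrep]
    exact Finset.sum_congr rfl fun a _ => prod_update_eq (v a) idx q m
  have key : ∀ idx idx' : ∀ j' : Fin d, Fin (n j'),
      (∑ m : Fin (n q), T (Function.update idx q m) * T (Function.update idx' q m))
        = ∑ a, (∑ k, v a q k * v a q k) * (P a idx * P a idx') := by
    intro idx idx'
    have : ∀ m : Fin (n q), T (Function.update idx q m) * T (Function.update idx' q m)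
        = (∑ a, v a q m * P a idx) * (∑ b, v b q m * P b idx') := by
      intro m; rw [hTu, hTu]
    rw [Finset.sum_congr rfl fun m _ => this m]
    exact contract_expand (fun a k => v a q k) (fun s t hst => horth q s t hst)
      (fun a => P a idx) (fun b => P b idx')
  rw [key, key]
  refine Finset.sum_congr rfl fun a _ => ?_
  congr 1
  -- P a i * P a j = P a (update i ℓ (j ℓ)) * P a (update j ℓ (i ℓ))
  have hmem : ℓ ∈ univ.erase q := Finset.mem_erase.mpr ⟨hlq, mem_univ ℓ⟩
  have split : ∀ (idx : ∀ j' : Fin d, Fin (n j')),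
      P a idx = v a ℓ (idx ℓ) * ∏ j' ∈ (univ.erase q).erase ℓ, v a j' (idx j') := by
    intro idx
    rw [hP]
    exact (Finset.mul_prod_erase _ _ hmem).symm
  have hupd : ∀ (idx : ∀ j' : Fin d, Fin (n j')) (x : Fin (n ℓ)),
      (∏ j' ∈ (univ.erase q).erase ℓ, v a j' (Function.update idx ℓ x j'))
        = ∏ j' ∈ (univ.erase q).erase ℓ, v a j' (idx j') := by
    intro idx x
    refine Finset.prod_congr rfl fun j' hj' => ?_
    rw [Function.update_of_ne (Finset.ne_of_mem_erase hj')]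
  rw [split i, split j, split _, split _]
  rw [Function.update_self, Function.update_self, hupd, hupd]
  ring

private lemma odeco_dim_one {n : Fin 1 → ℕ} (T : (∀ j : Fin 1, Fin (n j)) → ℝ) : IsOdeco T := by
  refine ⟨1, fun _ => Fin.cons (fun a => T (Fin.cons a (fun i => i.elim0))) (fun i => i.elim0),
    ?_, ?_⟩
  · intro j i i' hii'
    exact absurd (Subsingleton.elim i i') hii'
  · intro idx
    rw [Fin.sum_univ_one, Fin.prod_univ_one]
    have : idx = Fin.cons (idx 0) (fun i => i.elim0) := by
      funext j
      refine Fin.cases ?_ ?_ j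
      · rfl
      · intro i; exact i.elim0
    conv_lhs => rw [this]
    rfl

private lemma odeco_backward {m : ℕ} {n : Fin (m + 2) → ℕ} (hn : ∀ j, 1 ≤ n j)
    (T : (∀ j : Fin (m + 2), Fin (n j)) → ℝ)
    (hc : ∀ (q ℓ : Fin (m + 2)), ℓ ≠ q →
        ∀ i j : ∀ j' : Fin (m + 2), Fin (n j'),
          (∑ mm : Fin (n q), T (Function.update i q mm) * T (Function.update j q mm)) =
          ∑ mm : Fin (n q),
            T (Function.update (Function.update i ℓ (j ℓ)) q mm) *
              T (Function.update (Function.update j ℓ (i ℓ)) q mm)) : IsOdeco T := by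
  classical
  -- the "rest" index type
  let C : ∀ (_ : Fin (n 0)) (_ : Fin (n ((0 : Fin (m + 1)).succ)))
      (_ : ∀ p : Fin m, Fin (n p.succ.succ)), ∀ j : Fin (m + 2), Fin (n j) :=
    fun a b w => Fin.cons a (Fin.cons b w)
  have hCdef : ∀ a b w, C a b w = Fin.cons a (Fin.cons b w) := fun a b w => rfl
  have hC0 : ∀ a b w, C a b w 0 = a := fun a b w => rfl
  have hC1 : ∀ a b w, C a b w ((0 : Fin (m + 1)).succ) = b := fun a b w => by
    rw [hCdef, Fin.cons_succ, Fin.cons_zero]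
  have hCp : ∀ a b w (p : Fin m), C a b w p.succ.succ = w p := fun a b w p => by
    rw [hCdef, Fin.cons_succ, Fin.cons_succ]
  have hup0 : ∀ a b w a', Function.update (C a b w) 0 a' = C a' b w := fun a b w a' => by
    rw [hCdef, hCdef, Fin.update_cons_zero]
  have hup1 : ∀ a b w b', Function.update (C a b w) ((0 : Fin (m + 1)).succ) b' = C a b' w :=
    fun a b w b' => by
    rw [hCdef, hCdef, ← Fin.cons_update, Fin.update_cons_zero]
  have hupp : ∀ a b w (p : Fin m) x, Function.update (C a b w) p.succ.succ x
      = C a b (Function.update w p x) := fun a b w p x => by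
    rw [hCdef, hCdef, ← Fin.cons_update, ← Fin.cons_update]
  -- default values
  let a₀ : Fin (n 0) := ⟨0, hn 0⟩
  let b₀ : Fin (n ((0 : Fin (m + 1)).succ)) := ⟨0, hn _⟩
  -- the slice family
  let A : (∀ p : Fin m, Fin (n p.succ.succ)) → Fin (n 0) → Fin (n ((0 : Fin (m + 1)).succ)) → ℝ :=
    fun w a b => T (C a b w)
  have h1 : ∀ w w' i j, (∑ k, A w i k * A w' j k) = ∑ k, A w j k * A w' i k := by
    intro w w' i j
    have H := hc ((0 : Fin (m + 1)).succ) 0 (Ne.symm (Fin.succ_ne_zero 0)) (C i b₀ w) (C j b₀ w')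
    simp only [hC0, hC1, hCp, hup0, hup1, hupp] at H
    exact H
  have h2 : ∀ w w' i j, (∑ k, A w k i * A w' k j) = ∑ k, A w k j * A w' k i := by
    intro w w' i j
    have H := hc 0 ((0 : Fin (m + 1)).succ) (Fin.succ_ne_zero 0) (C a₀ i w) (C a₀ j w')
    simp only [hC0, hC1, hCp, hup0, hup1, hupp] at H
    exact H
  obtain ⟨e, f, u, he, hf, hA⟩ := simultaneous_svd A h1 h2
  have horth_e : ∀ s t, s ≠ t → (∑ k, e s k * e t k) = 0 := fun s t hst => by
    rw [he s t, if_neg hst]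
  -- replace u by a version vanishing when f vanishes
  let u' : Fin (n 0) → (∀ p : Fin m, Fin (n p.succ.succ)) → ℝ :=
    fun s w => if f s = 0 then 0 else u s w
  have hu'app : ∀ s w, u' s w = if f s = 0 then 0 else u s w := fun s w => rfl
  have hu'zero : ∀ s, f s = 0 → ∀ w, u' s w = 0 := fun s hfs w => by
    rw [hu'app, if_pos hfs]
  have hu'f : ∀ s, u' s ≠ 0 → f s ≠ 0 := fun s h hf0 =>
    h (funext fun w => hu'zero s hf0 w)
  have hTrep : ∀ a b w, T (C a b w) = ∑ s, e s a * f s b * u' s w := by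
    intro a b w
    have h0 := hA w a b
    rw [show A w a b = T (C a b w) from rfl] at h0
    rw [h0]
    refine Finset.sum_congr rfl fun s _ => ?_
    by_cases hfs : f s = 0
    · rw [hu'app, if_pos hfs, show f s b = 0 from by rw [hfs]; rfl]
      ring
    · rw [hu'app, if_neg hfs]
  -- contraction along mode 0
  have hcontract0 : ∀ b b' w w', (∑ mm, T (C mm b w) * T (C mm b' w'))
      = ∑ s, f s b * f s b' * (u' s w * u' s w') := by
    intro b b' w w'
    have h0 : ∀ mm, T (C mm b w) * T (C mm b' w')
        = (∑ s, e s mm * (f s b * u' s w)) * (∑ t, e t mm * (f t b' * u' t w')) := by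
      intro mm
      rw [hTrep, hTrep]
      congr 1 <;> exact Finset.sum_congr rfl fun s _ => by ring
    rw [Finset.sum_congr rfl fun mm _ => h0 mm, contract_expand e horth_e]
    refine Finset.sum_congr rfl fun s _ => ?_
    rw [he s s, if_pos rfl]
    ring
  -- contraction along a rest mode
  have hcontractP : ∀ (p : Fin m) a a' b b' w w',
      (∑ mm : Fin (n p.succ.succ),
          T (C a b (Function.update w p mm)) * T (C a' b' (Function.update w' p mm)))
      = ∑ s, ∑ t, e s a * f s b * (e t a' * f t b')
          * (∑ mm, u' s (Function.update w p mm) * u' t (Function.update w' p mm)) := by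
    intro p a a' b b' w w'
    have h0 : ∀ mm : Fin (n p.succ.succ),
        T (C a b (Function.update w p mm)) * T (C a' b' (Function.update w' p mm))
        = (∑ s, (e s a * f s b) * u' s (Function.update w p mm))
          * (∑ t, (e t a' * f t b') * u' t (Function.update w' p mm)) := by
      intro mm
      rw [hTrep, hTrep]
    rw [Finset.sum_congr rfl fun mm _ => h0 mm,
      sum_mul_sum_contract (fun s => e s a * f s b) (fun t => e t a' * f t b')
        (fun s mm => u' s (Function.update w p mm)) (fun t mm => u' t (Function.update w' p mm))]
  -- exchange identities for each u' t
  have hex : ∀ t (ℓ : Fin m) w w', u' t w * u' t w'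
      = u' t (Function.update w ℓ (w' ℓ)) * u' t (Function.update w' ℓ (w ℓ)) := by
    intro t ℓ w w'
    by_cases hft : f t = 0
    · simp only [hu'zero t hft]
    · refine cancel_orth f hf (fun s => u' s w * u' s w')
        (fun s => u' s (Function.update w ℓ (w' ℓ)) * u' s (Function.update w' ℓ (w ℓ)))
        ?_ t hft
      intro b b'
      have H := hc 0 ℓ.succ.succ (Fin.succ_ne_zero _) (C a₀ b w) (C a₀ b' w')
      simp only [hC0, hC1, hCp, hup0, hup1, hupp] at H
      rw [hcontract0, hcontract0] at H
      exact H
  -- cross orthogonality of the u' in every rest mode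
  have hCzero : ∀ (p : Fin m) σ τ, σ ≠ τ → f σ ≠ 0 → f τ ≠ 0 → ∀ w w',
      (∑ mm : Fin (n p.succ.succ),
        u' σ (Function.update w p mm) * u' τ (Function.update w' p mm)) = 0 := by
    intro p σ τ hστ hfσ hfτ w w'
    refine cancel_orth2 e f he hf
      (fun s t => ∑ mm, u' s (Function.update w p mm) * u' t (Function.update w' p mm))
      ?_ σ τ hστ hfσ hfτ
    intro a a' b b'
    have hne : (0 : Fin (m + 1)).succ ≠ p.succ.succ :=
      fun hh => Fin.succ_ne_zero p (Fin.succ_injective _ hh).symm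
    have H := hc p.succ.succ ((0 : Fin (m + 1)).succ) hne (C a b w) (C a' b' w')
    simp only [hC0, hC1, hCp, hup0, hup1, hupp] at H
    rw [hcontractP, hcontractP] at H
    exact H
  -- decompose each u' as a rank-one tensor
  have hpure := fun s => pure_of_exchange (u' s) (hex s)
  choose c v hrep2 hcase using hpure
  -- assemble the odeco decomposition
  let V : Fin (n 0) → ∀ j : Fin (m + 2), Fin (n j) → ℝ :=
    fun s => Fin.cons (fun a => c s * e s a) (Fin.cons (f s) (v s))
  have hVdef : ∀ s, V s = Fin.cons (fun a => c s * e s a) (Fin.cons (f s) (v s)) :=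
    fun s => rfl
  have hV0 : ∀ s, V s 0 = fun a => c s * e s a := fun s => rfl
  have hV1 : ∀ s, V s ((0 : Fin (m + 1)).succ) = f s := fun s => by
    rw [hVdef, Fin.cons_succ, Fin.cons_zero]
  have hVp : ∀ s (p : Fin m), V s p.succ.succ = v s p := fun s p => by
    rw [hVdef, Fin.cons_succ, Fin.cons_succ]
  refine ⟨n 0, V, ?_, ?_⟩
  · -- orthogonality in every mode
    intro j s t hst
    refine Fin.cases ?_ ?_ j
    · -- mode 0
      simp only [hV0]
      calc (∑ a, (c s * e s a) * (c t * e t a))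
          = (c s * c t) * ∑ a, e s a * e t a := by
            rw [Finset.mul_sum]
            exact Finset.sum_congr rfl fun a _ => by ring
        _ = 0 := by rw [horth_e s t hst, mul_zero]
    · intro jj
      refine Fin.cases ?_ ?_ jj
      · -- mode 1
        simp only [hV1]
        exact hf s t hst
      · -- rest modes
        intro p
        simp only [hVp]
        rcases hcase s with hzs | ⟨hcs, wsts, hwsts⟩
        · rw [Finset.sum_congr rfl fun x _ => by rw [hzs p x, zero_mul]]
          exact Finset.sum_const_zero
        rcases hcase t with hzt | ⟨hct, wstt, hwstt⟩
        · rw [Finset.sum_congr rfl fun x _ => by rw [hzt p x, mul_zero]]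
          exact Finset.sum_const_zero
        have hprod_s : (∏ j', v s j' (wsts j')) ≠ 0 :=
          Finset.prod_ne_zero_iff.mpr fun j' _ => hwsts j'
        have hprod_t : (∏ j', v t j' (wstt j')) ≠ 0 :=
          Finset.prod_ne_zero_iff.mpr fun j' _ => hwstt j'
        have hu's : u' s ≠ 0 := by
          intro h0
          have : u' s wsts = 0 := by rw [h0]; rfl
          rw [hrep2 s wsts] at this
          exact (mul_ne_zero hcs hprod_s) this
        have hu't : u' t ≠ 0 := by
          intro h0
          have : u' t wstt = 0 := by rw [h0]; rfl
          rw [hrep2 t wstt] at this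
          exact (mul_ne_zero hct hprod_t) this
        have H := hCzero p s t hst (hu'f s hu's) (hu'f t hu't) wsts wstt
        have hQs : (∏ j' ∈ univ.erase p, v s j' (wsts j')) ≠ 0 :=
          Finset.prod_ne_zero_iff.mpr fun j' _ => hwsts j'
        have hQt : (∏ j' ∈ univ.erase p, v t j' (wstt j')) ≠ 0 :=
          Finset.prod_ne_zero_iff.mpr fun j' _ => hwstt j'
        have hfactor : (∑ mm : Fin (n p.succ.succ),
            u' s (Function.update wsts p mm) * u' t (Function.update wstt p mm))
            = (c s * (∏ j' ∈ univ.erase p, v s j' (wsts j')))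
              * (c t * (∏ j' ∈ univ.erase p, v t j' (wstt j')))
              * ∑ x, v s p x * v t p x := by
          rw [Finset.mul_sum]
          refine Finset.sum_congr rfl fun x _ => ?_
          rw [hrep2 s, hrep2 t, prod_update_eq (v s) wsts p x, prod_update_eq (v t) wstt p x]
          ring
        rw [hfactor] at H
        rcases mul_eq_zero.mp H with H' | H'
        · exact absurd H' (mul_ne_zero (mul_ne_zero hcs hQs) (mul_ne_zero hct hQt))
        · exact H'
  · -- representation
    intro idx
    have hidx : idx = C (idx 0) (idx ((0 : Fin (m + 1)).succ)) (fun p => idx p.succ.succ) := by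
      funext j
      refine Fin.cases ?_ ?_ j
      · rfl
      · intro jj
        refine Fin.cases ?_ ?_ jj
        · rw [hC1]
        · intro p
          rw [hCp]
    rw [hidx, hTrep]
    refine Finset.sum_congr rfl fun s _ => ?_
    rw [Fin.prod_univ_succ, Fin.prod_univ_succ]
    simp only [hC0, hC1, hCp, hV0, hV1, hVp]
    rw [hrep2 s]
    ring

/-- A tensor `T` of size `n 0 × ⋯ × n (d-1)` is odeco iff for every mode `q` the contraction
`T •_q T` of `T` with itself along the `q`-th mode, with entries
`∑ m, T i[q ↦ m] * T j[q ↦ m]`, is symmetric under exchanging the `ℓ`-th indices `i ℓ` and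
`j ℓ` of its two "blocks", for every `ℓ ≠ q`. -/
theorem odeco_iff_contractions_symmetric
    {d : ℕ} (hd : 1 ≤ d) (n : Fin d → ℕ) (hn : ∀ j, 1 ≤ n j)
    (T : (∀ j : Fin d, Fin (n j)) → ℝ) :
    IsOdeco T ↔
      ∀ (q ℓ : Fin d), ℓ ≠ q →
        ∀ i j : ∀ j' : Fin d, Fin (n j'),
          (∑ m : Fin (n q), T (Function.update i q m) * T (Function.update j q m)) =
          ∑ m : Fin (n q),
            T (Function.update (Function.update i ℓ (j ℓ)) q m) *
              T (Function.update (Function.update j ℓ (i ℓ)) q m) := by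
  constructor
  · exact odeco_forward
  · intro hcond
    cases d with
    | zero => exact absurd hd (by omega)
    | succ d' =>
      cases d' with
      | zero => exact odeco_dim_one T
      | succ m => exact odeco_backward hn T hcond
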